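/- Let k and n be integers with 1 ≤ n < k. With the SL_k(ℂ)-action on ℂ[x_{i,j} : 1 ≤ i ≤ k, 1 ≤ j ≤ n] given by x_{i,j} ↦ Σ_m g_{i,m} x_{m,j}, every polynomial fixed by all elements of SL_k(ℂ) is a constant. -/

import Mathlib

/-- The action of `g ∈ SL_k(ℂ)` on `ℂ[x_{i,j} : 1 ≤ i ≤ k, 1 ≤ j ≤ n]` as the
`ℂ`-algebra endomorphism substituting `x_{i,j} ↦ Σ_m g_{i,m} x_{m,j}`. -/
noncomputable def slAct (k n : ℕ) (g : Matrix.SpecialLinearGroup (Fin k) ℂ) :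
    MvPolynomial (Fin k × Fin n) ℂ →ₐ[ℂ] MvPolynomial (Fin k × Fin n) ℂ :=
  MvPolynomial.aeval fun p => ∑ m : Fin k, g.val p.1 m • MvPolynomial.X (m, p.2)

lemma eval_slAct (k n : ℕ) (g : Matrix.SpecialLinearGroup (Fin k) ℂ)
    (P : MvPolynomial (Fin k × Fin n) ℂ) (x : Fin k × Fin n → ℂ) :
    MvPolynomial.eval x (slAct k n g P) =
      MvPolynomial.eval (fun p => ∑ m : Fin k, g.val p.1 m * x (m, p.2)) P := by
  rw [slAct, MvPolynomial.aeval_def, MvPolynomial.eval_eval₂]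
  rw [show (MvPolynomial.eval x).comp (algebraMap ℂ (MvPolynomial (Fin k × Fin n) ℂ)) =
    RingHom.id ℂ by ext r; simp]
  rw [MvPolynomial.eval₂_id]
  have h2 : (fun s : Fin k × Fin n =>
      MvPolynomial.eval x (∑ m : Fin k, g.val s.1 m • MvPolynomial.X (m, s.2))) =
      fun p : Fin k × Fin n => ∑ m : Fin k, g.val p.1 m * x (m, p.2) := by
    funext p
    simp
  rw [h2]

/-- For `1 ≤ n < k`, every polynomial in `ℂ[x_{i,j}]` fixed by all of `SL_k(ℂ)`
is constant. -/
theorem stmt13 (k n : ℕ) (hn : 1 ≤ n) (hnk : n < k)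
    (P : MvPolynomial (Fin k × Fin n) ℂ)
    (hP : ∀ g : Matrix.SpecialLinearGroup (Fin k) ℂ, slAct k n g P = P) :
    ∃ c : ℂ, P = MvPolynomial.C c := by
  classical
  set e : Fin n ⊕ Fin (k - n) ≃ Fin k :=
    finSumFinEquiv.trans (finCongr (Nat.add_sub_cancel' hnk.le)) with he
  -- the "top n×n block" of a point
  set A : (Fin k × Fin n → ℂ) → Matrix (Fin n) (Fin n) ℂ :=
    fun x => Matrix.of fun i j => x (e (Sum.inl i), j) with hA
  -- base point: first n standard basis vectors
  set x0 : Fin k × Fin n → ℂ := fun p => if p.1 = e (Sum.inl p.2) then 1 else 0 with hx0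
  set c : ℂ := MvPolynomial.eval x0 P with hc
  -- key: if the top block of x is invertible, then eval x P = c
  have key : ∀ x : Fin k × Fin n → ℂ, (A x).det ≠ 0 → MvPolynomial.eval x P = c := by
    intro x hdx
    set d : ℂ := (A x).det with hd
    set Dm : Matrix (Fin (k - n)) (Fin (k - n)) ℂ :=
      Matrix.diagonal (fun i => if (i : ℕ) = 0 then d⁻¹ else 1) with hDm
    set B : Matrix (Fin n ⊕ Fin (k - n)) (Fin n ⊕ Fin (k - n)) ℂ :=
      Matrix.fromBlocks (A x) 0 (Matrix.of fun i j => x (e (Sum.inr i), j)) Dm with hB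
    set g : Matrix (Fin k) (Fin k) ℂ := B.submatrix e.symm e.symm with hg
    have hkn : 0 < k - n := by omega
    have hDmdet : Dm.det = d⁻¹ := by
      rw [hDm, Matrix.det_diagonal]
      rw [Finset.prod_eq_single_of_mem (⟨0, hkn⟩ : Fin (k - n)) (Finset.mem_univ _)]
      · simp
      · intro b _ hb
        have : (b : ℕ) ≠ 0 := fun h => hb (Fin.ext h)
        simp [this]
    have hgdet : g.det = 1 := by
      rw [hg, Matrix.det_submatrix_equiv_self, hB, Matrix.det_fromBlocks_zero₁₂, hDmdet,
        mul_inv_cancel₀ hdx]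
    have hinv := hP ⟨g, hgdet⟩
    have h1 := congrArg (MvPolynomial.eval x0) hinv
    replace h1 := (eval_slAct k n ⟨g, hgdet⟩ P x0).symm.trans h1
    have hxeq2 : (fun p : Fin k × Fin n =>
        ∑ m : Fin k, (⟨g, hgdet⟩ : Matrix.SpecialLinearGroup (Fin k) ℂ).val p.1 m * x0 (m, p.2))
        = x := by
      funext p
      obtain ⟨i, j⟩ := p
      have : ∀ m : Fin k, g i m * x0 (m, j) = if m = e (Sum.inl j) then g i m else 0 := by
        intro m
        rw [hx0]
        by_cases h : m = e (Sum.inl j) <;> simp [h]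
      simp only [this]
      rw [Finset.sum_ite_eq' Finset.univ (e (Sum.inl j)) (fun m => g i m)]
      simp only [Finset.mem_univ, if_true]
      rw [hg]
      simp only [Matrix.submatrix_apply, Equiv.symm_apply_apply]
      rcases h : e.symm i with a | a
      · have hi : i = e (Sum.inl a) := by rw [← h, Equiv.apply_symm_apply]
        rw [hB]; simp [hA, hi]
      · have hi : i = e (Sum.inr a) := by rw [← h, Equiv.apply_symm_apply]
        rw [hB]; simp [hi]
    rw [hxeq2] at h1
    rw [h1, hc]
  -- the minor as a polynomial
  set D : MvPolynomial (Fin k × Fin n) ℂ :=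
    (Matrix.of fun i j : Fin n => MvPolynomial.X (e (Sum.inl i), j) :
      Matrix (Fin n) (Fin n) (MvPolynomial (Fin k × Fin n) ℂ)).det with hDdef
  have hevalD : ∀ x : Fin k × Fin n → ℂ, MvPolynomial.eval x D = (A x).det := by
    intro x
    rw [hDdef, RingHom.map_det]
    congr 1
    ext i j
    simp [hA]
  have hDne : D ≠ 0 := by
    intro h
    have := hevalD x0
    rw [h] at this
    have hA0 : A x0 = 1 := by
      ext i j
      by_cases h' : i = j <;> simp [hA, hx0, h', Matrix.one_apply]
    rw [hA0] at this
    simp at this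
  have hzero : (P - MvPolynomial.C c) * D = 0 := by
    apply MvPolynomial.funext
    intro x
    rw [map_mul, map_sub, MvPolynomial.eval_C, hevalD, map_zero]
    by_cases hx : (A x).det = 0
    · rw [hx, mul_zero]
    · rw [key x hx, sub_self, zero_mul]
  refine ⟨c, ?_⟩
  rcases mul_eq_zero.mp hzero with h | h
  · exact sub_eq_zero.mp h
  · exact absurd h hDne
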